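/- Let f : (0,∞) → ℝ be convex with f(1) = 0 and f(0) := lim_{t→0+} f(t) finite. Then the function g(x) = f(0) + x·(f(1/x) − f(0)) is non-increasing on the interval (0, 1]. -/

import Mathlib

/-- Key lemma: the slope from the (limit) point 0 is monotone. -/
lemma slope_from_zero_mono (f : ℝ → ℝ) (f0 : ℝ)
    (hconv : ConvexOn ℝ (Set.Ioi (0:ℝ)) f)
    (hlim : Filter.Tendsto f (nhdsWithin 0 (Set.Ioi 0)) (nhds f0))
    {s t : ℝ} (hs : 0 < s) (hst : s ≤ t) :
    (f s - f0) / s ≤ (f t - f0) / t := by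
  have ht : 0 < t := hs.trans_le hst
  have hmem : ∀ᶠ u in nhdsWithin 0 (Set.Ioi 0),
      (f s - f u) / (s - u) ≤ (f t - f u) / (t - u) := by
    filter_upwards [eventually_mem_nhdsWithin,
      eventually_nhdsWithin_of_eventually_nhds (eventually_lt_nhds hs)] with u hu hus
    exact hconv.secant_mono hu (Set.mem_Ioi.mpr hs) (Set.mem_Ioi.mpr ht)
      (ne_of_gt hus) (ne_of_gt (hus.trans_le hst)) hst
  have hid : Filter.Tendsto (fun u : ℝ => u) (nhdsWithin 0 (Set.Ioi 0)) (nhds 0) :=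
    Filter.Tendsto.mono_left Filter.tendsto_id nhdsWithin_le_nhds
  have h1 : Filter.Tendsto (fun u => (f s - f u) / (s - u)) (nhdsWithin 0 (Set.Ioi 0))
      (nhds ((f s - f0) / s)) := by
    have := (((tendsto_const_nhds (x := f s)).sub hlim).div
      ((tendsto_const_nhds (x := s)).sub hid) (by simpa using hs.ne'))
    simpa [Pi.div_def] using this
  have h2 : Filter.Tendsto (fun u => (f t - f u) / (t - u)) (nhdsWithin 0 (Set.Ioi 0))
      (nhds ((f t - f0) / t)) := by
    have := (((tendsto_const_nhds (x := f t)).sub hlim).div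
      ((tendsto_const_nhds (x := t)).sub hid) (by simpa using ht.ne'))
    simpa [Pi.div_def] using this
  exact le_of_tendsto_of_tendsto h1 h2 hmem

/-- If `f` is convex on `(0,∞)` with `f 1 = 0` and has finite right limit `f0` at `0`,
then `g x = f0 + x * (f (1/x) - f0)` is non-increasing on `(0,1]`. -/
theorem g_antitone (f : ℝ → ℝ) (f0 : ℝ)
    (hconv : ConvexOn ℝ (Set.Ioi (0:ℝ)) f) (hf1 : f 1 = 0)
    (hlim : Filter.Tendsto f (nhdsWithin 0 (Set.Ioi 0)) (nhds f0)) :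
    AntitoneOn (fun x : ℝ => f0 + x * (f (1 / x) - f0)) (Set.Ioc (0:ℝ) 1) := by
  intro x hx y hy hxy
  have hx0 : 0 < x := hx.1
  have hy0 : 0 < y := hy.1
  have key := slope_from_zero_mono f f0 hconv hlim (s := 1 / y) (t := 1 / x)
    (by positivity) (one_div_le_one_div_of_le hx0 hxy)
  have e1 : (f (1 / y) - f0) / (1 / y) = y * (f (1 / y) - f0) := by
    field_simp
  have e2 : (f (1 / x) - f0) / (1 / x) = x * (f (1 / x) - f0) := by
    field_simp
  rw [e1, e2] at key
  simpa using add_le_add_left key f0
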